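/- Let G be a group with a choice of generators w ↦ w̄ from W. Assume: (a) limsup_{n→∞} |V_n|^{1/n} = 2m, i.e., the gross cogrowth θ equals 1 (by the Grigorchuk–Kesten characterization, this says that G is amenable); (b) the set V = { w ∈ W : w̄ = 1 } is recursively enumerable, i.e., V is the domain of a partial computable function on W (this holds whenever G is finitely presented); (c) there is a partial computable function F from W to Bool whose domain D is exponentially generic, and which is correct on its domain: for every w ∈ D, F(w) is defined and F(w) = true if and only if w̄ = 1. Then the word problem of G is decidable: the predicate w ↦ (w̄ = 1) on W is computable. Equivalently: if G is a finitely presented amenable group with unsolvable word problem, then for any choice of generators the word problem in G is not solvable on any exponentially generic subset of W. -/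

import Mathlib

open Filter

namespace GenericSubgroups

/-- A word over the alphabet `Fin m × Bool` (generator index, with `true` = formal inverse). -/
abbrev Word (m : ℕ) := List (Fin m × Bool)

/-- The disk of radius `n` : words of length at most `n`. -/
def ball (m n : ℕ) : Set (Word m) := {w | w.length ≤ n}

/-- The sphere of radius `n` : words of length exactly `n`. -/
def sphere (m n : ℕ) : Set (Word m) := {w | w.length = n}

/-- A set of words is exponentially negligible. -/
def ExpNegligible {m : ℕ} (X : Set (Word m)) : Prop :=
  ∃ α : ℝ, 0 < α ∧ α < 1 ∧
    ∀ᶠ n in atTop, ((X ∩ ball m n).ncard : ℝ) / ((ball m n).ncard : ℝ) ≤ α ^ n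

/-- A set of words is exponentially generic if its complement is exponentially negligible. -/
def ExpGeneric {m : ℕ} (X : Set (Word m)) : Prop := ExpNegligible Xᶜ

/-- Disk of radius `n` in the set of `k`-tuples of words. -/
def ballK (m k n : ℕ) : Set (Fin k → Word m) := {w | ∀ i, (w i).length ≤ n}

def ExpNegligibleK {m k : ℕ} (X : Set (Fin k → Word m)) : Prop :=
  ∃ α : ℝ, 0 < α ∧ α < 1 ∧
    ∀ᶠ n in atTop, ((X ∩ ballK m k n).ncard : ℝ) / ((ballK m k n).ncard : ℝ) ≤ α ^ n

def ExpGenericK {m k : ℕ} (X : Set (Fin k → Word m)) : Prop := ExpNegligibleK Xᶜ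

variable {G : Type*} [Group G]

/-- Evaluation of a word in `G`, determined by the family `g` of generators. -/
def eval {m : ℕ} (g : Fin m → G) (w : Word m) : G :=
  (w.map (fun p => if p.2 then (g p.1)⁻¹ else g p.1)).prod

/-- Word length of an element of `G`. -/
noncomputable def wlen {m : ℕ} (g : Fin m → G) (x : G) : ℕ :=
  sInf {n | ∃ w : Word m, w.length = n ∧ eval g w = x}

/-- Word metric on `G`. -/
noncomputable def wdist {m : ℕ} (g : Fin m → G) (x y : G) : ℕ := wlen g (x⁻¹ * y)

/-- Words of length exactly `n` representing the identity. -/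
def V {m : ℕ} (g : Fin m → G) (n : ℕ) : Set (Word m) :=
  {w | w.length = n ∧ eval g w = 1}

/-- The gross cogrowth `θ = limsup (1/n) log_{2m} |V_n|`. -/
noncomputable def cogrowth {m : ℕ} (g : Fin m → G) : ℝ :=
  limsup (fun n : ℕ => Real.logb (2 * m : ℝ) ((V g n).ncard : ℝ) / (n : ℝ)) atTop

/-- The four-point (quadrilateral) condition with constant `δ` for the word metric. -/
def FourPoint {m : ℕ} (g : Fin m → G) (δ : ℝ) : Prop :=
  ∀ p q r s : G,
    (wdist g p s : ℝ) + (wdist g q r : ℝ) ≤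
      2 * δ + max ((wdist g p q : ℝ) + (wdist g r s : ℝ)) ((wdist g p r : ℝ) + (wdist g q s : ℝ))

/-- The Gromov product `(x|y)_1` with respect to the word metric. -/
noncomputable def gp {m : ℕ} (g : Fin m → G) (x y : G) : ℝ :=
  ((wlen g x : ℝ) + (wlen g y : ℝ) - (wlen g (x⁻¹ * y) : ℝ)) / 2

/-- `x^e` where `e : Bool`, `true` meaning inverse. -/
def powB (x : G) (e : Bool) : G := if e then x⁻¹ else x

/-- Formal inverse of a word. -/
def winv {m : ℕ} (w : Word m) : Word m := (w.reverse).map (fun p => (p.1, !p.2))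



open Encodable in
theorem re_exists_dom {α β : Type} [Primcodable α] [Primcodable β] {Q : β × α →. Unit}
    (hQ : Partrec Q) : REPred fun a : α => ∃ b : β, (Q (b, a)).Dom := by
  obtain ⟨c, hc⟩ := Nat.Partrec.Code.exists_code.1 hQ
  let test : α → ℕ → Option Unit := fun a n =>
    (Nat.Partrec.Code.evaln n.unpair.2 c (Nat.pair n.unpair.1 (encode a))).map fun _ => ()
  have htest : Computable₂ test := by
    have h1 : Primrec fun p : α × ℕ =>
        ((p.2.unpair.2, c), Nat.pair p.2.unpair.1 (encode p.1)) :=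
      ((Primrec.snd.comp (Primrec.unpair.comp Primrec.snd)).pair (Primrec.const c)).pair
        (Primrec₂.natPair.comp (Primrec.fst.comp (Primrec.unpair.comp Primrec.snd))
          (Primrec.encode.comp Primrec.fst))
    have h2 : Primrec fun p : α × ℕ =>
        Nat.Partrec.Code.evaln p.2.unpair.2 c (Nat.pair p.2.unpair.1 (encode p.1)) :=
      Nat.Partrec.Code.primrec_evaln.comp h1
    exact (Primrec.option_map h2 (Primrec.const ()).to₂).to_comp
  have hpart : Partrec fun a : α => Nat.rfindOpt (test a) := Partrec.rfindOpt htest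
  have hdom : ∀ a : α, (Nat.rfindOpt (test a)).Dom ↔ ∃ b : β, (Q (b, a)).Dom := by
    intro a
    rw [Nat.rfindOpt_dom]
    constructor
    · rintro ⟨n, u, hu⟩
      simp only [test, Option.mem_def, Option.map_eq_some_iff] at hu
      obtain ⟨x, hx, -⟩ := hu
      have hx' := Nat.Partrec.Code.evaln_sound hx
      rw [hc] at hx'
      simp only [Part.mem_bind_iff, Part.mem_map_iff, Part.mem_ofOption, Option.mem_def] at hx'
      obtain ⟨p, hp, y, hy, -⟩ := hx'
      rw [Encodable.decode_prod_val, Nat.unpair_pair] at hp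
      simp only [Encodable.encodek, Option.map_some, Option.bind_eq_some_iff,
        Option.map_eq_some_iff] at hp
      obtain ⟨b, hb, hba⟩ := hp
      obtain rfl := Option.some.inj hba
      exact ⟨b, Part.dom_iff_mem.2 ⟨y, hy⟩⟩
    · rintro ⟨b, hb⟩
      obtain ⟨y, hy⟩ := Part.dom_iff_mem.1 hb
      have hmem : encode y ∈ (Q (b, a)).map encode := Part.mem_map encode hy
      have hev : encode y ∈ Nat.Partrec.Code.eval c (encode (b, a)) := by
        rw [hc]
        exact Part.mem_bind_iff.2 ⟨(b, a), by simp [Part.mem_ofOption], hmem⟩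
      obtain ⟨k, hk⟩ := Nat.Partrec.Code.evaln_complete.1 hev
      refine ⟨Nat.pair (encode b) k, (), ?_⟩
      have : encode (b, a) = Nat.pair (encode b) (encode a) := Encodable.encode_prod_val b a
      simp only [test, Option.mem_def, Option.map_eq_some_iff, Nat.unpair_pair]
      exact ⟨encode y, by rw [← this]; exact hk, trivial⟩
  refine hpart.of_eq fun a => Part.ext fun u => ?_
  rw [Part.mem_assert_iff]
  constructor
  · intro hu
    exact ⟨(hdom a).1 (Part.dom_iff_mem.2 ⟨u, hu⟩), by simp⟩
  · rintro ⟨h, -⟩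
    obtain ⟨v, hv⟩ := Part.dom_iff_mem.1 ((hdom a).2 h)
    cases u; cases v; exact hv

open Encodable in
lemma exists_Q {α : Type} [Primcodable α] (F : List α →. Bool) (hF : Partrec F) :
    ∃ Q : List α × List α →. Unit, Partrec Q ∧
      ∀ u w : List α, (Q (u, w)).Dom ↔ true ∈ F u ∧ false ∈ F (u ++ w) := by
  refine ⟨fun p =>
    ((F p.1).bind fun b1 => (F (p.1 ++ p.2)).map fun b2 => (b1, b2)).bind
      fun bb => ((bif bb.1 then bif bb.2 then none else some () else none : Option Unit) :
        Part Unit), ?_, ?_⟩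
  · have h1 : Partrec fun p : List α × List α => F p.1 := hF.comp Computable.fst
    have h2 : Partrec fun x : (List α × List α) × Bool =>
        (F (x.1.1 ++ x.1.2)).map fun b2 => (x.2, b2) :=
      Partrec.map
        (hF.comp (Computable.list_append.comp (Computable.fst.comp Computable.fst)
          (Computable.snd.comp Computable.fst)))
        ((Computable.snd.comp Computable.fst).pair Computable.snd).to₂
    have h3 := h1.bind h2.to₂
    have hcond : Computable fun x : (List α × List α) × (Bool × Bool) =>
        (bif x.2.1 then bif x.2.2 then none else some () else none : Option Unit) :=
      Computable.cond (Computable.fst.comp Computable.snd)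
        (Computable.cond (Computable.snd.comp Computable.snd)
          (Computable.const none) (Computable.const (some ())))
        (Computable.const none)
    exact h3.bind (Computable.ofOption hcond).to₂
  · intro u w
    constructor
    · intro h
      obtain ⟨v, hv⟩ := Part.dom_iff_mem.1 h
      simp only [Part.mem_bind_iff, Part.mem_map_iff, Part.mem_ofOption, Option.mem_def] at hv
      obtain ⟨⟨b1, b2⟩, ⟨b1', hb1, b2', hb2, heq⟩, hcond⟩ := hv
      cases b1 <;> cases b2 <;> simp_all
    · rintro ⟨h1, h2⟩
      refine Part.dom_iff_mem.2 ⟨(), ?_⟩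
      simp only [Part.mem_bind_iff, Part.mem_map_iff, Part.mem_ofOption, Option.mem_def]
      exact ⟨(true, false), ⟨true, h1, false, h2, rfl⟩, rfl⟩

lemma eval_append {m : ℕ} (g : Fin m → G) (u v : Word m) :
    eval g (u ++ v) = eval g u * eval g v := by
  simp [eval]

lemma sphere_finite (m n : ℕ) : (sphere m n).Finite := List.finite_length_eq _ n

lemma ball_finite (m n : ℕ) : (ball m n).Finite := List.finite_length_le _ n

lemma sphere_ncard (m n : ℕ) : (sphere m n).ncard = (2 * m) ^ n := by
  rw [← Nat.card_coe_set_eq]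
  have e : (sphere m n) ≃ List.Vector (Fin m × Bool) n :=
    { toFun := fun x => ⟨x.1, x.2⟩
      invFun := fun v => ⟨v.1, v.2⟩
      left_inv := fun x => rfl
      right_inv := fun v => rfl }
  rw [Nat.card_congr e, Nat.card_eq_fintype_card, card_vector, Fintype.card_prod,
    Fintype.card_fin, Fintype.card_bool]
  ring

lemma ball_succ (m n : ℕ) : ball m (n + 1) = ball m n ∪ sphere m (n + 1) := by
  ext w; simp only [ball, sphere, Set.mem_setOf_eq, Set.mem_union]; omega

lemma ball_ncard_succ (m n : ℕ) :
    (ball m (n + 1)).ncard = (ball m n).ncard + (2 * m) ^ (n + 1) := by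
  rw [ball_succ, Set.ncard_union_eq ?_ (ball_finite m n) (sphere_finite m (n+1)), sphere_ncard]
  rw [Set.disjoint_iff_inter_eq_empty]
  ext w; simp only [ball, sphere, Set.mem_inter_iff, Set.mem_setOf_eq, Set.mem_empty_iff_false,
    iff_false, not_and]; omega

lemma ball_zero_ncard (m : ℕ) : (ball m 0).ncard = 1 := by
  have : ball m 0 = {([] : Word m)} := by
    ext w; simp [ball, List.length_eq_zero_iff]
  rw [this, Set.ncard_singleton]

lemma ball_ncard_le (m : ℕ) (hm : 1 ≤ m) (n : ℕ) : (ball m n).ncard ≤ 2 * (2 * m) ^ n := by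
  induction n with
  | zero => simp [ball_zero_ncard]
  | succ n ih =>
    rw [ball_ncard_succ]
    have h2 : 2 * (2*m)^n ≤ (2*m)^(n+1) := by
      rw [pow_succ]
      have : (2:ℕ) ≤ 2*m := by omega
      nlinarith [pow_pos (by omega : 0 < 2*m) n]
    omega

lemma sphere_subset_ball (m n : ℕ) : sphere m n ⊆ ball m n := fun w hw => le_of_eq hw

lemma ball_ncard_ge (m n : ℕ) : (2 * m) ^ n ≤ (ball m n).ncard := by
  rw [← sphere_ncard]
  exact Set.ncard_le_ncard (sphere_subset_ball m n) (ball_finite m n)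

lemma ball_nonempty (m n : ℕ) : (ball m n).Nonempty := ⟨[], by simp [ball]⟩

lemma ball_ncard_pos (m n : ℕ) : 0 < (ball m n).ncard :=
  (Set.ncard_pos (ball_finite m n)).2 (ball_nonempty m n)

lemma exists_good {m : ℕ} (hm : 2 ≤ m) {G : Type*} [Group G] (g : Fin m → G)
    (hamen : cogrowth g = 1) (D : Set (Word m)) (hgen : ExpNegligible Dᶜ) (w : Word m) :
    ∃ u : Word m, eval g u = 1 ∧ u ∈ D ∧ (u ++ w) ∈ D := by
  classical
  obtain ⟨α, hα0, hα1, hev⟩ := hgen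
  obtain ⟨N, hN⟩ := eventually_atTop.1 hev
  set L := w.length with hL
  set Ar : ℝ := 2 * (m : ℝ) with hAr
  have hm2 : (2:ℝ) ≤ (m:ℝ) := by exact_mod_cast hm
  have hAr4 : (4:ℝ) ≤ Ar := by rw [hAr]; linarith
  have hAr1 : 1 < Ar := by linarith
  have hArpos : (0:ℝ) < Ar := by linarith
  have hα1' : 1 < α⁻¹ := (one_lt_inv₀ hα0).2 hα1
  have hlogbpos : 0 < Real.logb Ar α⁻¹ := Real.logb_pos hAr1 hα1'
  set δ : ℝ := min (Real.logb Ar α⁻¹) 1 / 2 with hδ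
  have hδpos : 0 < δ := div_pos (lt_min hlogbpos one_pos) two_pos
  have hδle : δ ≤ 1/2 := by
    rw [hδ]; have := min_le_right (Real.logb Ar α⁻¹) 1; linarith
  set t : ℝ := 1 - δ with htdef
  have ht1 : t < 1 := by rw [htdef]; linarith
  have ht2 : 1/2 ≤ t := by rw [htdef]; linarith
  have hαlt : α < Ar ^ (-δ) := by
    have h1 : Real.logb Ar α = - Real.logb Ar α⁻¹ := by
      rw [← Real.logb_inv]; simp
    have h2 : Real.logb Ar α < -δ := by
      have hlt : δ < Real.logb Ar α⁻¹ := by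
        rw [hδ]
        have h3 := min_le_left (Real.logb Ar α⁻¹) 1
        have h4 := lt_min hlogbpos one_pos
        linarith
      rw [h1]; linarith
    calc α = Ar ^ Real.logb Ar α := (Real.rpow_logb hArpos (ne_of_gt hAr1) hα0).symm
    _ < Ar ^ (-δ) := (Real.rpow_lt_rpow_left_iff hAr1).2 h2
  set ρ : ℝ := Ar ^ (-δ) / α with hρ
  have hρ1 : 1 < ρ := (one_lt_div hα0).2 hαlt
  set C : ℝ := 2 + 2 * Ar ^ L with hC
  have hevC : ∀ᶠ n : ℕ in atTop, C ≤ ρ ^ n :=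
    (tendsto_pow_atTop_atTop_of_one_lt hρ1).eventually_ge_atTop C
  set a : ℕ → ℝ := fun n => Real.logb (2 * (m:ℝ)) ((V g n).ncard : ℝ) / (n : ℝ) with ha
  have hls : limsup a atTop = 1 := hamen
  have ha_le : ∀ n, a n ≤ 1 := by
    intro n
    rcases Nat.eq_zero_or_pos n with rfl | hn
    · simp [ha]
    · have hVle : (V g n).ncard ≤ (2*m)^n := by
        rw [← sphere_ncard]
        exact Set.ncard_le_ncard (fun u hu => hu.1) (sphere_finite m n)
      have hlogb : Real.logb Ar ((V g n).ncard : ℝ) ≤ (n:ℝ) := by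
        rcases Nat.eq_zero_or_pos (V g n).ncard with h0 | hpos
        · rw [h0]; simp
        · have h1 : (1:ℝ) ≤ ((V g n).ncard:ℝ) := by exact_mod_cast hpos
          have h2 : ((V g n).ncard : ℝ) ≤ Ar ^ (n:ℝ) := by
            rw [Real.rpow_natCast]
            calc ((V g n).ncard : ℝ) ≤ (((2*m)^n : ℕ):ℝ) := by exact_mod_cast hVle
            _ = Ar ^ n := by rw [hAr]; push_cast; ring
          calc Real.logb Ar ((V g n).ncard : ℝ) ≤ Real.logb Ar (Ar ^ (n:ℝ)) :=
                Real.logb_le_logb_of_le hAr1 (by linarith) h2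
          _ = (n:ℝ) := Real.logb_rpow hArpos (ne_of_gt hAr1)
      have hnR : (0:ℝ) < (n:ℝ) := by exact_mod_cast hn
      rw [ha]
      rw [div_le_one hnR]
      exact hlogb
  have ha_ge : ∀ n, (0:ℝ) ≤ a n := by
    intro n
    rw [ha]
    apply div_nonneg _ (Nat.cast_nonneg n)
    rcases Nat.eq_zero_or_pos (V g n).ncard with h0 | hpos
    · rw [h0]; simp
    · exact Real.logb_nonneg hAr1 (by exact_mod_cast hpos)
  have hfreq : ∃ᶠ n in atTop, t < a n :=
    frequently_lt_of_lt_limsup (isCoboundedUnder_le_of_le atTop ha_ge) (by rw [hls]; exact ht1)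
  obtain ⟨n, hta, hCn, hnN⟩ := (hfreq.and_eventually (hevC.and (eventually_ge_atTop N))).exists
  have hn1 : 1 ≤ n := by
    by_contra h
    push_neg at h
    interval_cases n
    · simp [ha] at hta; linarith
  have hnR : (0:ℝ) < (n:ℝ) := by exact_mod_cast hn1
  have hVpos : 0 < (V g n).ncard := by
    by_contra h
    push_neg at h
    have h0 : (V g n).ncard = 0 := by omega
    have ha0 : a n = 0 := by rw [ha]; simp [h0]
    have hta2 : t < a n := hta
    rw [ha0] at hta2
    linarith
  have hV : Ar ^ (t * (n:ℝ)) < ((V g n).ncard : ℝ) := by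
    have h1 : t * (n:ℝ) < Real.logb Ar ((V g n).ncard : ℝ) := by
      rw [ha] at hta
      rw [lt_div_iff₀ hnR] at hta
      exact hta
    exact (Real.lt_logb_iff_rpow_lt hAr1 (by exact_mod_cast hVpos)).1 h1
  have hb1 := hN n hnN
  have hb2 := hN (n + L) (le_trans hnN (Nat.le_add_right n L))
  have hpos1 : (0:ℝ) < ((ball m n).ncard : ℝ) := by exact_mod_cast ball_ncard_pos m n
  have hpos2 : (0:ℝ) < ((ball m (n+L)).ncard : ℝ) := by exact_mod_cast ball_ncard_pos m (n+L)
  rw [div_le_iff₀ hpos1] at hb1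
  rw [div_le_iff₀ hpos2] at hb2
  have hub1 : ((ball m n).ncard : ℝ) ≤ 2 * Ar ^ n := by
    calc ((ball m n).ncard:ℝ) ≤ ((2*(2*m)^n : ℕ):ℝ) := by
          exact_mod_cast ball_ncard_le m (by omega) n
    _ = 2 * Ar ^ n := by rw [hAr]; push_cast; ring
  have hub2 : ((ball m (n+L)).ncard : ℝ) ≤ 2 * Ar ^ (n+L) := by
    calc ((ball m (n+L)).ncard:ℝ) ≤ ((2*(2*m)^(n+L) : ℕ):ℝ) := by
          exact_mod_cast ball_ncard_le m (by omega) (n+L)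
    _ = 2 * Ar ^ (n+L) := by rw [hAr]; push_cast; ring
  by_contra hno
  push_neg at hno
  have hsub : V g n ⊆ (Dᶜ ∩ ball m n) ∪ (ball m n ∩ {u : Word m | u ++ w ∈ Dᶜ}) := by
    intro u hu
    have hub : u ∈ ball m n := le_of_eq hu.1
    by_cases hD : u ∈ D
    · exact Or.inr ⟨hub, hno u hu.2 hD⟩
    · exact Or.inl ⟨hD, hub⟩
  have hcard : (V g n).ncard ≤
      (Dᶜ ∩ ball m n).ncard + (ball m n ∩ {u : Word m | u ++ w ∈ Dᶜ}).ncard := by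
    refine le_trans (Set.ncard_le_ncard hsub ?_) (Set.ncard_union_le _ _)
    exact ((ball_finite m n).inter_of_right _).union ((ball_finite m n).inter_of_left _)
  have hmap : (ball m n ∩ {u : Word m | u ++ w ∈ Dᶜ}).ncard ≤ (Dᶜ ∩ ball m (n+L)).ncard := by
    refine Set.ncard_le_ncard_of_injOn (fun u => u ++ w) ?_ ?_
      ((ball_finite m (n+L)).inter_of_right _)
    · rintro u ⟨h1, h2⟩
      refine ⟨h2, ?_⟩
      simp only [ball, Set.mem_setOf_eq, List.length_append]
      exact Nat.add_le_add_right h1 L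
    · exact fun x _ y _ h => List.append_left_injective w h
  have hαn : (0:ℝ) ≤ α ^ n := pow_nonneg hα0.le n
  have hchain : ((V g n).ncard : ℝ) ≤ α ^ n * Ar ^ n * C := by
    have e1 : ((Dᶜ ∩ ball m n).ncard : ℝ) ≤ α^n * (2 * Ar ^ n) :=
      le_trans hb1 (mul_le_mul_of_nonneg_left hub1 hαn)
    have e2 : ((Dᶜ ∩ ball m (n+L)).ncard : ℝ) ≤ α^n * (2 * Ar^n * Ar^L) := by
      have hαL : α^L ≤ 1 := pow_le_one₀ hα0.le hα1.le
      calc ((Dᶜ ∩ ball m (n+L)).ncard : ℝ) ≤ α^(n+L) * ((ball m (n+L)).ncard:ℝ) := hb2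
      _ ≤ α^(n+L) * (2*Ar^(n+L)) :=
          mul_le_mul_of_nonneg_left hub2 (pow_nonneg hα0.le _)
      _ = α^n * (2*Ar^n*Ar^L) * α^L := by rw [pow_add, pow_add]; ring
      _ ≤ α^n * (2*Ar^n*Ar^L) * 1 := by
          apply mul_le_mul_of_nonneg_left hαL
          positivity
      _ = α^n * (2*Ar^n*Ar^L) := by ring
    calc ((V g n).ncard:ℝ)
        ≤ ((Dᶜ ∩ ball m n).ncard:ℝ) + ((Dᶜ ∩ ball m (n+L)).ncard:ℝ) := by
          exact_mod_cast le_trans hcard (Nat.add_le_add_left hmap _)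
      _ ≤ α^n*(2*Ar^n) + α^n*(2*Ar^n*Ar^L) := add_le_add e1 e2
      _ = α^n * Ar^n * C := by rw [hC]; ring
  have hfinal : α ^ n * Ar ^ n * C ≤ Ar ^ (t * (n:ℝ)) := by
    have h1 : α^n * Ar^n * C ≤ α^n*Ar^n*ρ^n := by
      apply mul_le_mul_of_nonneg_left hCn
      positivity
    have h3 : α*Ar*ρ = Ar^t := by
      have e : Ar ^ t = Ar ^ (1:ℝ) * Ar ^ (-δ) := by
        rw [← Real.rpow_add hArpos, htdef, sub_eq_add_neg]
      rw [hρ, e, Real.rpow_one]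
      field_simp
    have h4 : (Ar^t)^n = Ar^(t*(n:ℝ)) := by
      rw [Real.rpow_mul hArpos.le, Real.rpow_natCast]
    calc α^n*Ar^n*C ≤ α^n*Ar^n*ρ^n := h1
    _ = (α*Ar*ρ)^n := by ring
    _ = Ar^(t*(n:ℝ)) := by rw [h3, h4]
  linarith

/-- Theorem `generic`: if `G` is amenable (`θ = 1`), the word problem set
`V = {w : w̄ = 1}` is recursively enumerable (as in any finitely presented group), and
some correct partial algorithm for the word problem has exponentially generic domain,
then the word problem of `G` is decidable. Contrapositively: a finitely presented
amenable group with unsolvable word problem has word problem unsolvable on every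
exponentially generic set of words. -/
theorem word_problem_not_generically_solvable (m : ℕ) (hm : 2 ≤ m) {G : Type*} [Group G]
    (g : Fin m → G) (hsurj : Function.Surjective (eval g))
    (hamen : cogrowth g = 1)
    (hre : ∃ E : Word m →. Unit, Partrec E ∧ ∀ w : Word m, (E w).Dom ↔ eval g w = 1)
    (F : Word m →. Bool) (hF : Partrec F)
    (hgen : ExpGeneric {w : Word m | (F w).Dom})
    (hcorrect : ∀ (w : Word m) (h : (F w).Dom), ((F w).get h = true ↔ eval g w = 1)) :
    ComputablePred (fun w : Word m => eval g w = 1) := by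
  classical
  rw [ComputablePred.computable_iff_re_compl_re']
  constructor
  · obtain ⟨E, hE, hdom⟩ := hre
    exact hE.dom_re.of_eq hdom
  · set D : Set (Word m) := {w : Word m | (F w).Dom} with hDdef
    obtain ⟨Q, hQ, hQdom⟩ := exists_Q F hF
    have hRe : REPred fun w' : Word m => ∃ u : Word m, (Q (u, w')).Dom := re_exists_dom hQ
    apply hRe.of_eq
    intro w'
    constructor
    · rintro ⟨u, hu⟩
      rw [hQdom] at hu
      obtain ⟨hu1, hu2⟩ := hu
      have h1 : (F u).Dom := Part.dom_iff_mem.2 ⟨_, hu1⟩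
      have h2 : (F (u ++ w')).Dom := Part.dom_iff_mem.2 ⟨_, hu2⟩
      have e1 : (F u).get h1 = true := Part.get_eq_of_mem hu1 h1
      have e2 : (F (u ++ w')).get h2 = false := Part.get_eq_of_mem hu2 h2
      have heu : eval g u = 1 := (hcorrect u h1).1 e1
      intro hw
      have : (F (u ++ w')).get h2 = true :=
        (hcorrect _ h2).2 (by rw [eval_append, heu, hw, one_mul])
      rw [e2] at this
      exact Bool.false_ne_true this
    · intro hw
      obtain ⟨u, hu1, huD, huwD⟩ := exists_good hm g hamen D hgen w'
      have hFu : (F u).Dom := huD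
      have hFuw : (F (u ++ w')).Dom := huwD
      refine ⟨u, (hQdom u w').2 ⟨?_, ?_⟩⟩
      · have := Part.get_mem hFu
        rwa [(hcorrect u hFu).2 hu1] at this
      · have hne : (F (u ++ w')).get hFuw ≠ true := by
          intro hT
          have hthis := (hcorrect _ hFuw).1 hT
          rw [eval_append, hu1, one_mul] at hthis
          exact hw hthis
        have := Part.get_mem hFuw
        rwa [Bool.not_eq_true _ |>.mp hne] at this


end GenericSubgroups
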